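/- Let G_i = (V_i, E_i), i = 1, ..., k, be finite simple graphs with nonempty vertex sets. Suppose W ⊆ V_1 × ... × V_k contains no orthogonal path, i.e. there is no choice of edges {u_i, w_i} ∈ E_i for i = 1, ..., k such that the k+1 tuples U_j = (u_1, ..., u_j, w_{j+1}, ..., w_k), for j = 0, 1, ..., k, all lie in W. Then |W| / (|V_1| ⋯ |V_k|) ≤ Σ_{i=1}^{k} α(G_i)/|V_i|. -/

import Mathlib

open Finset

/-- The independence number of a finite simple graph: the largest size of a set of
vertices inducing no edges. -/
noncomputable def indepNum {V : Type*} [Fintype V] (G : SimpleGraph V) : ℕ :=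
  sSup {m | ∃ s : Finset V, (∀ x ∈ s, ∀ y ∈ s, ¬ G.Adj x y) ∧ s.card = m}

lemma card_le_indepNum {V : Type*} [Fintype V] (G : SimpleGraph V) (s : Finset V)
    (hs : ∀ x ∈ s, ∀ y ∈ s, ¬ G.Adj x y) : s.card ≤ indepNum G := by
  apply le_csSup
  · refine ⟨Fintype.card V, fun m hm => ?_⟩
    obtain ⟨t, -, rfl⟩ := hm
    exact t.card_le_univ.trans (le_of_eq card_univ)
  · exact ⟨s, hs, rfl⟩

section Aux

open scoped Classical

variable {k : ℕ} {V : Fin k → Type*} [∀ i, Fintype (V i)]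

/-- Replace coordinates `i` with `j ≤ i < l` of `z` by those of `u`. -/
def repl (z u : ∀ i, V i) (j l : ℕ) : ∀ i, V i :=
  fun i => if j ≤ (i : ℕ) ∧ (i : ℕ) < l then u i else z i

/-- Points of `W` from which the orthogonal path can be completed starting at coord `j`. -/
noncomputable def TT (G : ∀ i, SimpleGraph (V i)) (W : Finset (∀ i, V i)) (j : ℕ) :
    Finset (∀ i, V i) :=
  W.filter (fun z => ∃ u : ∀ i, V i,
    (∀ i : Fin k, j ≤ (i : ℕ) → (G i).Adj (z i) (u i)) ∧
    (∀ l : ℕ, j ≤ l → l ≤ k → repl z u j l ∈ W))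

lemma mem_TT {G : ∀ i, SimpleGraph (V i)} {W : Finset (∀ i, V i)} {j : ℕ} {z : ∀ i, V i} :
    z ∈ TT G W j ↔ z ∈ W ∧ ∃ u : ∀ i, V i,
      (∀ i : Fin k, j ≤ (i : ℕ) → (G i).Adj (z i) (u i)) ∧
      (∀ l : ℕ, j ≤ l → l ≤ k → repl z u j l ∈ W) := by
  rw [TT, mem_filter]

lemma TT_subset {G : ∀ i, SimpleGraph (V i)} {W : Finset (∀ i, V i)} {j : ℕ} :
    TT G W j ⊆ W := fun _ hz => (mem_TT.mp hz).1

lemma TT_top (G : ∀ i, SimpleGraph (V i)) (W : Finset (∀ i, V i)) : TT G W k = W := by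
  ext z
  rw [mem_TT]
  constructor
  · exact fun h => h.1
  · intro hz
    refine ⟨hz, z, fun i hi => absurd i.isLt (by omega), fun l hl hl' => ?_⟩
    have hlk : l = k := le_antisymm hl' hl
    subst hlk
    have h2 : repl z z l l = z := by
      funext i; simp only [repl]; rw [if_neg (by omega)]
    rwa [h2]

lemma TT_step {G : ∀ i, SimpleGraph (V i)} {W : Finset (∀ i, V i)} (c : Fin k)
    {z : ∀ i, V i} :
    z ∈ TT G W (c : ℕ) ↔ z ∈ W ∧ ∃ y, (G c).Adj (z c) y ∧
      Function.update z c y ∈ TT G W ((c : ℕ) + 1) := by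
  constructor
  · intro hz
    obtain ⟨hzW, u, h1, h2⟩ := mem_TT.mp hz
    have hupd : Function.update z c (u c) = repl z u (c : ℕ) ((c : ℕ) + 1) := by
      funext i
      by_cases hic : i = c
      · subst hic
        simp only [Function.update_self, repl]
        rw [if_pos (by omega)]
      · have hne : (i : ℕ) ≠ (c : ℕ) := fun h => hic (Fin.ext h)
        simp only [Function.update_of_ne hic, repl]
        rw [if_neg (by omega)]
    refine ⟨hzW, u c, h1 c le_rfl, ?_⟩
    rw [mem_TT]
    refine ⟨by rw [hupd]; exact h2 _ (by omega) c.isLt, u, ?_, ?_⟩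
    · intro i hi
      have hic : i ≠ c := fun h => by omega
      rw [Function.update_of_ne hic]
      exact h1 i (by omega)
    · intro l hl hl'
      have heq : repl (Function.update z c (u c)) u ((c : ℕ) + 1) l = repl z u (c : ℕ) l := by
        funext i
        by_cases hic : i = c
        · subst hic
          simp only [repl, Function.update_self]
          rw [if_neg (by omega), if_pos (by omega)]
        · have hne : (i : ℕ) ≠ (c : ℕ) := fun h => hic (Fin.ext h)
          simp only [repl, Function.update_of_ne hic]
          by_cases h : (c : ℕ) + 1 ≤ (i : ℕ) ∧ (i : ℕ) < l
          · rw [if_pos h, if_pos (by omega)]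
          · rw [if_neg h, if_neg (by omega)]
      rw [heq]
      exact h2 l (by omega) hl'
  · rintro ⟨hzW, y, hadj, hy⟩
    obtain ⟨-, u', h1, h2⟩ := mem_TT.mp hy
    refine mem_TT.mpr ⟨hzW, Function.update u' c y, ?_, ?_⟩
    · intro i hi
      by_cases hic : i = c
      · subst hic
        rwa [Function.update_self]
      · have hne : (i : ℕ) ≠ (c : ℕ) := fun h => hic (Fin.ext h)
        rw [Function.update_of_ne hic]
        have := h1 i (by omega)
        rwa [Function.update_of_ne hic] at this
    · intro l hl hl'
      rcases eq_or_lt_of_le hl with h | h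
      · have heq : repl z (Function.update u' c y) (c : ℕ) l = z := by
          funext i; simp only [repl]; rw [if_neg (by omega)]
        rwa [heq]
      · have heq : repl z (Function.update u' c y) (c : ℕ) l
            = repl (Function.update z c y) u' ((c : ℕ) + 1) l := by
          funext i
          by_cases hic : i = c
          · subst hic
            simp only [repl, Function.update_self]
            rw [if_pos (by omega), if_neg (by omega)]
          · have hne : (i : ℕ) ≠ (c : ℕ) := fun h => hic (Fin.ext h)
            simp only [repl, Function.update_of_ne hic]
            by_cases hcase : (c : ℕ) + 1 ≤ (i : ℕ) ∧ (i : ℕ) < l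
            · rw [if_pos (by omega), if_pos hcase]
            · rw [if_neg (by omega), if_neg hcase]
        rw [heq]
        exact h2 l (by omega) hl'

/-- The key counting estimate for one layer. -/
lemma layer_card (G : ∀ i, SimpleGraph (V i)) (W : Finset (∀ i, V i)) (c : Fin k) :
    (TT G W ((c : ℕ) + 1) \ TT G W (c : ℕ)).card * Fintype.card (V c) ≤
      indepNum (G c) * Fintype.card (∀ i, V i) := by
  set D := TT G W ((c : ℕ) + 1) \ TT G W (c : ℕ) with hDdef
  set E : Finset ((∀ i, V i) × V c) :=
    Finset.univ.filter (fun p => Function.update p.1 c p.2 ∈ D) with hE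
  have h1 : D.card * Fintype.card (V c) ≤ E.card := by
    rw [← card_univ (α := V c), ← Finset.card_product]
    apply Finset.card_le_card_of_injOn (fun p => (Function.update p.1 c p.2, p.1 c))
    · rintro ⟨z, a⟩ hp
      simp only [Finset.mem_coe, Finset.mem_product, Finset.mem_univ, and_true] at hp
      simp only [hE, Finset.mem_coe, Finset.mem_filter, Finset.mem_univ, true_and]
      simpa [Function.update_idem, Function.update_eq_self] using hp
    · rintro ⟨z, a⟩ - ⟨z', a'⟩ - h
      simp only [Prod.mk.injEq] at h
      obtain ⟨hfst, hsnd⟩ := h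
      have hz : z = z' := by
        have e1 : Function.update (Function.update z c a) c (z c) = z := by
          rw [Function.update_idem, Function.update_eq_self]
        have e2 : Function.update (Function.update z' c a') c (z' c) = z' := by
          rw [Function.update_idem, Function.update_eq_self]
        rw [← e1, ← e2, hfst, hsnd]
      have ha : a = a' := by
        have := congrArg (fun g => g c) hfst
        simpa [hz] using this
      simp [hz, ha]
  have h2 : E.card ≤ Fintype.card (∀ i, V i) * indepNum (G c) := by
    rw [Finset.card_eq_sum_card_fiberwise (f := Prod.fst) (t := Finset.univ)
      (fun p _ => Finset.mem_univ _)]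
    have hbound : ∀ g : ∀ i, V i,
        (E.filter fun p => p.1 = g).card ≤ indepNum (G c) := by
      intro g
      have hfib : (E.filter fun p => p.1 = g).card ≤
          (Finset.univ.filter (fun a : V c => Function.update g c a ∈ D)).card := by
        apply Finset.card_le_card_of_injOn Prod.snd
        · rintro ⟨z, a⟩ hp
          simp only [hE, Finset.mem_coe, Finset.mem_filter, Finset.mem_univ, true_and] at hp ⊢
          obtain ⟨hmem, rfl⟩ := hp
          exact hmem
        · rintro ⟨z, a⟩ hp ⟨z', a'⟩ hp' h
          simp only [hE, Finset.mem_coe, Finset.mem_filter, Finset.mem_univ,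
            true_and] at hp hp'
          simp only at h
          simp [Prod.ext_iff, h, hp.2, hp'.2]
      refine hfib.trans (card_le_indepNum _ _ ?_)
      intro a ha b hb hab
      simp only [Finset.mem_filter, Finset.mem_univ, true_and] at ha hb
      have haW : Function.update g c a ∈ W := TT_subset (Finset.mem_sdiff.mp ha).1
      have hmem : Function.update g c a ∈ TT G W (c : ℕ) := by
        rw [TT_step c]
        refine ⟨haW, b, ?_, ?_⟩
        · rwa [Function.update_self]
        · rw [Function.update_idem]
          exact (Finset.mem_sdiff.mp hb).1
      exact (Finset.mem_sdiff.mp ha).2 hmem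
    calc ∑ g : ∀ i, V i, (E.filter fun p => p.1 = g).card
        ≤ ∑ _g : ∀ i, V i, indepNum (G c) :=
          Finset.sum_le_sum (fun g _ => hbound g)
      _ = Fintype.card (∀ i, V i) * indepNum (G c) := by
          rw [Finset.sum_const, card_univ, smul_eq_mul]
  calc D.card * Fintype.card (V c) ≤ E.card := h1
    _ ≤ Fintype.card (∀ i, V i) * indepNum (G c) := h2
    _ = indepNum (G c) * Fintype.card (∀ i, V i) := mul_comm _ _

end Aux

/-- If `W ⊆ V 1 × ⋯ × V k` contains no orthogonal path, then
`|W| / (|V 1| ⋯ |V k|) ≤ Σ α(G i)/|V i|`.  Here an orthogonal path is a choice of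
edges `(u i, w i) ∈ E i` such that all the tuples
`U j = (u 1, …, u j, w (j+1), …, w k)`, `j = 0, …, k`, lie in `W`. -/
theorem cutting_corners_orthogonal_path {k : ℕ} {V : Fin k → Type*}
    [∀ i, Fintype (V i)] [∀ i, Nonempty (V i)]
    (G : ∀ i, SimpleGraph (V i)) (W : Finset (∀ i, V i))
    (hW : ¬ ∃ (u w : ∀ i, V i), (∀ i, (G i).Adj (u i) (w i)) ∧
      ∀ j : Fin (k+1), (fun i : Fin k => if (i : ℕ) < (j : ℕ) then u i else w i) ∈ W) :
    (W.card : ℝ) / ∏ i, (Fintype.card (V i) : ℝ) ≤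
      ∑ i, (indepNum (G i) : ℝ) / (Fintype.card (V i) : ℝ) := by
  classical
  set P : ℝ := ∏ i, (Fintype.card (V i) : ℝ) with hPdef
  have hn : ∀ i, 0 < (Fintype.card (V i) : ℝ) := fun i => by
    exact_mod_cast Fintype.card_pos
  have hP : 0 < P := Finset.prod_pos fun i _ => hn i
  have hcardpi : (Fintype.card (∀ i, V i) : ℝ) = P := by
    rw [Fintype.card_pi]; push_cast; rfl
  -- T_0 is empty
  have hT0 : TT G W 0 = ∅ := by
    by_contra h
    obtain ⟨z, hz⟩ := Finset.nonempty_iff_ne_empty.mpr h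
    obtain ⟨hzW, u, h1, h2⟩ := mem_TT.mp hz
    apply hW
    refine ⟨u, z, fun i => ((G i).adj_symm (h1 i (Nat.zero_le _))), fun j => ?_⟩
    have heq : (fun i : Fin k => if (i : ℕ) < (j : ℕ) then u i else z i)
        = repl z u 0 (j : ℕ) := by
      funext i; simp [repl, Nat.zero_le]
    rw [heq]
    exact h2 (j : ℕ) (Nat.zero_le _) (Nat.lt_succ_iff.mp j.isLt)
  -- auxiliary summand
  set f : ℕ → ℝ := fun i =>
    if h : i < k then (indepNum (G ⟨i, h⟩) : ℝ) * P / (Fintype.card (V ⟨i, h⟩) : ℝ) else 0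
    with hf
  have key : ∀ j, j ≤ k → ((TT G W j).card : ℝ) ≤ ∑ i ∈ Finset.range j, f i := by
    intro j
    induction j with
    | zero => intro _; simp [hT0]
    | succ j ih =>
      intro hjk
      have hj : j < k := hjk
      set c : Fin k := ⟨j, hj⟩ with hc
      have hstep := layer_card G W c
      have hD : ((TT G W (j + 1) \ TT G W j).card : ℝ) ≤
          (indepNum (G c) : ℝ) * P / (Fintype.card (V c) : ℝ) := by
        rw [le_div_iff₀ (hn c)]
        calc ((TT G W (j + 1) \ TT G W j).card : ℝ) * (Fintype.card (V c) : ℝ)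
            = (((TT G W (j + 1) \ TT G W j).card * Fintype.card (V c) : ℕ) : ℝ) := by
              push_cast; rfl
          _ ≤ ((indepNum (G c) * Fintype.card (∀ i, V i) : ℕ) : ℝ) := by exact_mod_cast hstep
          _ = (indepNum (G c) : ℝ) * P := by rw [Nat.cast_mul, hcardpi]
      have hcard : ((TT G W (j + 1)).card : ℝ) ≤
          ((TT G W (j + 1) \ TT G W j).card : ℝ) + ((TT G W j).card : ℝ) := by
        exact_mod_cast Finset.card_le_card_sdiff_add_card
      rw [Finset.sum_range_succ]
      have hfj : f j = (indepNum (G c) : ℝ) * P / (Fintype.card (V c) : ℝ) := by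
        simp only [hf, dif_pos hj]; rfl
      calc ((TT G W (j + 1)).card : ℝ)
          ≤ ((TT G W (j + 1) \ TT G W j).card : ℝ) + ((TT G W j).card : ℝ) := hcard
        _ ≤ (indepNum (G c) : ℝ) * P / (Fintype.card (V c) : ℝ) + ∑ i ∈ Finset.range j, f i :=
            add_le_add hD (ih (le_of_lt hj))
        _ = ∑ i ∈ Finset.range j, f i + f j := by rw [hfj]; ring
  have hWcard : ((W.card : ℝ)) ≤
      ∑ i : Fin k, (indepNum (G i) : ℝ) * P / (Fintype.card (V i) : ℝ) := by
    have hk := key k le_rfl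
    rw [TT_top] at hk
    refine hk.trans (le_of_eq ?_)
    rw [← Fin.sum_univ_eq_sum_range f k]
    apply Finset.sum_congr rfl
    intro i _
    simp only [hf]
    rw [dif_pos i.isLt]
  rw [div_le_iff₀ hP]
  refine hWcard.trans (le_of_eq ?_)
  rw [Finset.sum_mul]
  apply Finset.sum_congr rfl
  intro i _
  rw [div_mul_eq_mul_div]
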